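/- arXiv:1409.1205 — 2 statements merged into one kernel-verified Lean document; each statement's English description precedes it below -/
import Mathlib

section
/- Let X₁, X₂ : ℝ^d → ℝ^d be smooth vector fields and let ρ : ℝ^d → ℝ be a smooth, everywhere positive function. Then the following two conditions are equivalent: (1) for every j ∈ {1,…,d}, Σ_{i=1}^d ∂ᵢ( ρ·((X₁)ᵢ(X₂)ⱼ − (X₁)ⱼ(X₂)ᵢ) ) = 0 identically on ℝ^d; (2) at every point, [X₁,X₂] = (div(ρX₂)/ρ)·X₁ − (div(ρX₁)/ρ)·X₂. (This is the paper's reduction of equation (frobenius) to equation (frobenius2dim) in the case n = 2.) -/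
open MeasureTheory

noncomputable section

/-- `ℝ^d` as functions `Fin d → ℝ`. -/
abbrev Rd (d : ℕ) := Fin d → ℝ

/-- The Lie bracket `[X,Y](x) = DY(x)[X(x)] − DX(x)[Y(x)]` of vector fields on `ℝ^d`. -/
def lieBracket {d : ℕ} (X Y : Rd d → Rd d) (x : Rd d) : Rd d :=
  fderiv ℝ Y x (X x) - fderiv ℝ X x (Y x)

/-- The divergence `div X(x) = Σᵢ ∂Xᵢ/∂xᵢ(x)`. -/
def divg {d : ℕ} (X : Rd d → Rd d) (x : Rd d) : ℝ :=
  ∑ i, fderiv ℝ X x (Pi.single i 1) i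

lemma clm_sum {d : ℕ} {F : Type*} [NormedAddCommGroup F] [NormedSpace ℝ F]
    (D : Rd d →L[ℝ] F) (v : Rd d) :
    D v = ∑ i, v i • D (Pi.single i 1) := by
  conv_lhs => rw [← Finset.univ_sum_single v]
  rw [map_sum]
  congr 1; ext i
  rw [← _root_.map_smul]; congr 1; ext k
  by_cases h : k = i <;> simp [h, Pi.single_apply]

lemma divg_smul {d : ℕ} {X : Rd d → Rd d} {ρ : Rd d → ℝ} {x : Rd d}
    (hX : DifferentiableAt ℝ X x) (hρ : DifferentiableAt ℝ ρ x) :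
    divg (fun y => ρ y • X y) x = ρ x * divg X x + fderiv ℝ ρ x (X x) := by
  have hd : fderiv ℝ (fun y => ρ y • X y) x
      = ρ x • fderiv ℝ X x + (fderiv ℝ ρ x).smulRight (X x) := fderiv_smul hρ hX
  rw [divg, hd]
  simp only [ContinuousLinearMap.add_apply, ContinuousLinearMap.smul_apply,
    ContinuousLinearMap.smulRight_apply, Pi.add_apply, Pi.smul_apply, smul_eq_mul]
  rw [Finset.sum_add_distrib]
  congr 1
  · rw [divg, Finset.mul_sum]
  · rw [clm_sum (fderiv ℝ ρ x) (X x)]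
    simp [mul_comm]

lemma key {d : ℕ} {X₁ X₂ : Rd d → Rd d} {ρ : Rd d → ℝ} {x : Rd d}
    (hX1 : DifferentiableAt ℝ X₁ x) (hX2 : DifferentiableAt ℝ X₂ x)
    (hρ : DifferentiableAt ℝ ρ x) (j : Fin d) :
    ∑ i : Fin d, fderiv ℝ (fun y => ρ y * (X₁ y i * X₂ y j - X₁ y j * X₂ y i))
        x (Pi.single i 1)
    = divg (fun y => ρ y • X₁ y) x * X₂ x j - divg (fun y => ρ y • X₂ y) x * X₁ x j
        + ρ x * lieBracket X₁ X₂ x j := by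
  set A := fderiv ℝ X₁ x with hA
  set B := fderiv ℝ X₂ x with hB
  set r := fderiv ℝ ρ x with hr
  have hc : ∀ k, HasFDerivAt (fun y => X₁ y k)
      ((ContinuousLinearMap.proj k).comp A) x :=
    fun k => (ContinuousLinearMap.proj (R := ℝ) (φ := fun _ : Fin d => ℝ) k).hasFDerivAt.comp
      x hX1.hasFDerivAt
  have he : ∀ k, HasFDerivAt (fun y => X₂ y k)
      ((ContinuousLinearMap.proj k).comp B) x :=
    fun k => (ContinuousLinearMap.proj (R := ℝ) (φ := fun _ : Fin d => ℝ) k).hasFDerivAt.comp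
      x hX2.hasFDerivAt
  have hterm : ∀ (i : Fin d) (v : Rd d),
      fderiv ℝ (fun y => ρ y * (X₁ y i * X₂ y j - X₁ y j * X₂ y i)) x v
      = r v * (X₁ x i * X₂ x j - X₁ x j * X₂ x i)
        + ρ x * (A v i * X₂ x j + X₁ x i * B v j - (A v j * X₂ x i + X₁ x j * B v i)) := by
    intro i v
    have h := (hρ.hasFDerivAt.mul (((hc i).mul (he j)).sub ((hc j).mul (he i))))
    rw [HasFDerivAt.fderiv (f := fun y => ρ y * (X₁ y i * X₂ y j - X₁ y j * X₂ y i)) h]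
    simp only [ContinuousLinearMap.add_apply, ContinuousLinearMap.smul_apply,
      ContinuousLinearMap.sub_apply, ContinuousLinearMap.comp_apply,
      ContinuousLinearMap.proj_apply, smul_eq_mul, Pi.mul_apply, Pi.sub_apply]
    ring
  have s1 : ∑ i, r (Pi.single i 1) * X₁ x i = r (X₁ x) := by
    rw [clm_sum r (X₁ x)]; simp [mul_comm]
  have s2 : ∑ i, r (Pi.single i 1) * X₂ x i = r (X₂ x) := by
    rw [clm_sum r (X₂ x)]; simp [mul_comm]
  have s3 : ∑ i, X₁ x i * B (Pi.single i 1) j = B (X₁ x) j := by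
    rw [clm_sum B (X₁ x)]; simp
  have s4 : ∑ i, X₂ x i * A (Pi.single i 1) j = A (X₂ x) j := by
    rw [clm_sum A (X₂ x)]; simp
  have expand : ∑ i : Fin d, fderiv ℝ (fun y => ρ y * (X₁ y i * X₂ y j - X₁ y j * X₂ y i))
        x (Pi.single i 1)
      = (∑ i, r (Pi.single i 1) * X₁ x i) * X₂ x j
        - (∑ i, r (Pi.single i 1) * X₂ x i) * X₁ x j
        + ρ x * ((∑ i, A (Pi.single i 1) i) * X₂ x j + (∑ i, X₁ x i * B (Pi.single i 1) j)
          - ((∑ i, X₂ x i * A (Pi.single i 1) j) + X₁ x j * (∑ i, B (Pi.single i 1) i))) := by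
    simp only [Finset.sum_mul, Finset.mul_sum, ← Finset.sum_sub_distrib, ← Finset.sum_add_distrib]
    exact Finset.sum_congr rfl fun i _ => by rw [hterm i]; ring
  rw [expand, s1, s2, s3, s4, divg_smul hX1 hρ, divg_smul hX2 hρ]
  have hdiv1 : divg X₁ x = ∑ i, A (Pi.single i 1) i := rfl
  have hdiv2 : divg X₂ x = ∑ i, B (Pi.single i 1) i := rfl
  have hlie : lieBracket X₁ X₂ x j = B (X₁ x) j - A (X₂ x) j := rfl
  rw [hdiv1, hdiv2, hlie]
  ring

/-- The `n = 2` reduction of equation (frobenius) to (frobenius2dim). -/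
theorem frobenius_two_dim (d : ℕ) (X₁ X₂ : Rd d → Rd d)
    (h1 : ContDiff ℝ (⊤ : ℕ∞) X₁) (h2 : ContDiff ℝ (⊤ : ℕ∞) X₂)
    (ρ : Rd d → ℝ) (hρ : ContDiff ℝ (⊤ : ℕ∞) ρ) (hρpos : ∀ x, 0 < ρ x) :
    (∀ (j : Fin d) (x : Rd d),
        ∑ i : Fin d, fderiv ℝ (fun y => ρ y * (X₁ y i * X₂ y j - X₁ y j * X₂ y i))
          x (Pi.single i 1) = 0) ↔
    (∀ x : Rd d, lieBracket X₁ X₂ x =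
        (divg (fun y => ρ y • X₂ y) x / ρ x) • X₁ x
          - (divg (fun y => ρ y • X₁ y) x / ρ x) • X₂ x) := by
  have hd1 : ∀ x, DifferentiableAt ℝ X₁ x := fun x => (h1.differentiable (by simp)) x
  have hd2 : ∀ x, DifferentiableAt ℝ X₂ x := fun x => (h2.differentiable (by simp)) x
  have hdρ : ∀ x, DifferentiableAt ℝ ρ x := fun x => (hρ.differentiable (by simp)) x
  constructor
  · intro h x
    funext j
    have hx := h j x
    rw [key (hd1 x) (hd2 x) (hdρ x) j] at hx
    have hρx : ρ x ≠ 0 := (hρpos x).ne'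
    simp only [Pi.sub_apply, Pi.smul_apply, smul_eq_mul]
    field_simp
    linarith
  · intro h j x
    rw [key (hd1 x) (hd2 x) (hdρ x) j]
    have hx := congrFun (h x) j
    simp only [Pi.sub_apply, Pi.smul_apply, smul_eq_mul] at hx
    have hρx : ρ x ≠ 0 := (hρpos x).ne'
    rw [hx]
    field_simp
    ring

end
end

section
/- Let ψ : ℝ → ℝ be continuous, nonnegative, even (ψ(−s) = ψ(s)), compactly supported, and normalized so that ∫_{ℝ^d} ψ(|w|) dw = 1, where |·| is the Euclidean norm on ℝ^d. Let A : (ℝ^d)^n → ℝ be a continuous multilinear map (linear in each of its n arguments). Then for all v₁, …, vₙ ∈ ℝ^d, ∫_{(ℝ^d)^n} A(w₁,…,wₙ) · ψ(|w₁ − v₁|) ⋯ ψ(|wₙ − vₙ|) dw₁ ⋯ dwₙ = A(v₁,…,vₙ). (This is the key identity V(dω) = dω used in the proof of Lemma 4.1 of the paper: vertical mollification by a symmetric kernel fixes fiberwise multilinear functions.) -/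
open MeasureTheory

noncomputable section

private abbrev Ed (d : ℕ) := EuclideanSpace ℝ (Fin d)

private lemma vm_hcs {d : ℕ} {ψ : ℝ → ℝ} (hψsupp : HasCompactSupport ψ) (v : Ed d) :
    HasCompactSupport fun x : Ed d => ψ ‖x - v‖ := by
  obtain ⟨R, hR⟩ := hψsupp.isCompact.isBounded.subset_closedBall 0
  refine HasCompactSupport.intro (isCompact_closedBall v R) fun x hx => ?_
  by_contra h
  apply hx
  have h1 : ‖x - v‖ ∈ tsupport ψ := subset_tsupport ψ h
  have h2 := hR h1
  simp only [Metric.mem_closedBall, Real.dist_eq, sub_zero] at h2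
  rw [Metric.mem_closedBall, dist_eq_norm]
  exact (le_abs_self _).trans h2

private lemma vm_cont {d : ℕ} {ψ : ℝ → ℝ} (hψc : Continuous ψ) (v : Ed d) :
    Continuous fun x : Ed d => ψ ‖x - v‖ :=
  hψc.comp (continuous_id.sub continuous_const).norm

private lemma vm_key {d : ℕ} {ψ : ℝ → ℝ} (hψc : Continuous ψ)
    (hψsupp : HasCompactSupport ψ)
    (hψnorm : (∫ w : Ed d, ψ ‖w‖) = 1) (v : Ed d) (T : Ed d →L[ℝ] ℝ) :
    (∫ x : Ed d, ψ ‖x - v‖ * T x) = T v := by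
  have hcs0 : HasCompactSupport fun x : Ed d => ψ ‖x‖ := by
    simpa using vm_hcs hψsupp (0 : Ed d)
  have hc0 : Continuous fun x : Ed d => ψ ‖x‖ := by
    simpa using vm_cont (d := d) hψc 0
  have int1 : Integrable (fun x : Ed d => ψ ‖x‖ • x) :=
    (hc0.smul continuous_id).integrable_of_hasCompactSupport hcs0.smul_right
  have int2 : Integrable (fun x : Ed d => ψ ‖x‖ • v) :=
    (hc0.smul continuous_const).integrable_of_hasCompactSupport hcs0.smul_right
  have hzero : (∫ x : Ed d, ψ ‖x‖ • x) = 0 := by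
    have hneg := integral_neg_eq_self (fun x : Ed d => ψ ‖x‖ • x) volume
    simp only [norm_neg, smul_neg] at hneg
    rw [integral_neg] at hneg
    have hsum : (∫ x : Ed d, ψ ‖x‖ • x) + ∫ x : Ed d, ψ ‖x‖ • x = 0 := by
      nth_rewrite 1 [← hneg]; exact neg_add_cancel _
    have h2 : (2 : ℝ) • (∫ x : Ed d, ψ ‖x‖ • x) = 0 := by rw [two_smul]; exact hsum
    exact (smul_eq_zero.mp h2).resolve_left (by norm_num)
  have htrans : (∫ x : Ed d, ψ ‖x - v‖ • x) = v := by
    have h := integral_add_right_eq_self (μ := (volume : Measure (Ed d))) (fun x : Ed d => ψ ‖x - v‖ • x) v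
    rw [← h]
    simp only [add_sub_cancel_right, smul_add]
    rw [integral_add int1 int2, hzero, integral_smul_const, hψnorm, zero_add, one_smul]
  have intv : Integrable (fun x : Ed d => ψ ‖x - v‖ • x) :=
    ((vm_cont hψc v).smul continuous_id).integrable_of_hasCompactSupport
      (vm_hcs hψsupp v).smul_right
  have hT := T.integral_comp_comm intv
  simp only [ContinuousLinearMap.map_smul, smul_eq_mul] at hT
  rw [hT, htrans]

private lemma vm_aux (d : ℕ) {ψ : ℝ → ℝ} (hψc : Continuous ψ)
    (hψsupp : HasCompactSupport ψ)
    (hψnorm : (∫ w : Ed d, ψ ‖w‖) = 1) :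
    ∀ (n : ℕ) (A : ContinuousMultilinearMap ℝ (fun _ : Fin n => Ed d) ℝ)
      (v : Fin n → Ed d),
      (∫ w : Fin n → Ed d, A w * ∏ i, ψ ‖w i - v i‖) = A v := by
  intro n
  induction n with
  | zero =>
    intro A v
    have huniv : (volume : Measure (Fin 0 → Ed d)) Set.univ = 1 := by
      rw [volume_pi, Measure.pi_univ]; simp
    have hconst : ∀ w : Fin 0 → Ed d, A w * ∏ i, ψ ‖w i - v i‖ = A v := by
      intro w
      simp [Subsingleton.elim w v]
    simp only [hconst]
    rw [integral_const, measureReal_def, huniv]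
    simp
  | succ n ih =>
    intro A v
    set F : (Fin (n + 1) → Ed d) → ℝ := fun w => A w * ∏ i, ψ ‖w i - v i‖ with hF
    have hFc : Continuous F :=
      A.cont.mul (continuous_finset_prod _ fun i _ =>
        hψc.comp ((continuous_apply i).sub continuous_const).norm)
    have hFcs : HasCompactSupport F := by
      obtain ⟨R, hR⟩ := hψsupp.isCompact.isBounded.subset_closedBall 0
      refine HasCompactSupport.mul_left ?_
      refine HasCompactSupport.intro
        (isCompact_univ_pi fun i => isCompact_closedBall (v i) R) fun w hw => ?_
      simp only [Set.mem_univ_pi, not_forall] at hw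
      obtain ⟨i, hi⟩ := hw
      refine Finset.prod_eq_zero (Finset.mem_univ i) ?_
      by_contra h
      apply hi
      have h1 : ‖w i - v i‖ ∈ tsupport ψ := subset_tsupport ψ h
      have h2 := hR h1
      simp only [Metric.mem_closedBall, Real.dist_eq, sub_zero] at h2
      rw [Metric.mem_closedBall, dist_eq_norm]
      exact (le_abs_self _).trans h2
    have hFi : Integrable F := hFc.integrable_of_hasCompactSupport hFcs
    have hmp := (measurePreserving_piFinSuccAbove
      (fun _ : Fin (n + 1) => (volume : Measure (Ed d))) 0).symm
      (MeasurableEquiv.piFinSuccAbove (fun _ : Fin (n + 1) => Ed d) 0)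
    have hme := (MeasurableEquiv.piFinSuccAbove (fun _ : Fin (n + 1) => Ed d) 0).symm
      |>.measurableEmbedding
    have hsymm : ∀ p : Ed d × (Fin n → Ed d),
        (MeasurableEquiv.piFinSuccAbove (fun _ : Fin (n + 1) => Ed d) 0).symm p
          = Fin.cons p.1 p.2 := by
      intro p
      rw [MeasurableEquiv.piFinSuccAbove_symm_apply]
      simp [Fin.insertNthEquiv]
    have hcomp := hmp.integral_comp hme F
    have hFi' : Integrable (fun p : Ed d × (Fin n → Ed d) => F (Fin.cons p.1 p.2))
        ((volume : Measure (Ed d)).prod (Measure.pi fun _ : Fin n => volume)) := by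
      have h0 : Integrable F (Measure.pi fun _ : Fin (n + 1) => volume) := by
        rw [← volume_pi]; exact hFi
      have := (hmp.integrable_comp_emb hme (g := F)).mpr h0
      refine this.congr ?_
      filter_upwards with p
      simp only [Function.comp_apply, hsymm p]
    have step1 : (∫ w : Fin (n + 1) → Ed d, F w)
        = ∫ p : Ed d × (Fin n → Ed d), F (Fin.cons p.1 p.2)
            ∂((volume : Measure (Ed d)).prod (Measure.pi fun _ : Fin n => volume)) := by
      rw [show (volume : Measure (Fin (n + 1) → Ed d))
        = Measure.pi fun _ => volume from volume_pi, ← hcomp]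
      simp only [hsymm]
    have step2 := integral_prod _ hFi'
    have hinner : ∀ x : Ed d,
        (∫ y : Fin n → Ed d, F (Fin.cons x y) ∂(Measure.pi fun _ : Fin n => volume))
          = ψ ‖x - v 0‖ * (A.curryLeft x) (Fin.tail v) := by
      intro x
      have hpt : ∀ y : Fin n → Ed d, F (Fin.cons x y)
          = ψ ‖x - v 0‖ * ((A.curryLeft x) y * ∏ i, ψ ‖y i - Fin.tail v i‖) := by
        intro y
        rw [hF]
        simp only [ContinuousMultilinearMap.curryLeft_apply, Fin.prod_univ_succ,
          Fin.cons_zero, Fin.cons_succ, Fin.tail]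
        ring
      simp only [hpt]
      rw [← volume_pi, integral_const_mul, ih (A.curryLeft x) (Fin.tail v)]
    set T : Ed d →L[ℝ] ℝ :=
      (ContinuousMultilinearMap.apply ℝ (fun _ : Fin n => Ed d) ℝ (Fin.tail v)).comp
        A.curryLeft with hTdef
    have hTx : ∀ x : Ed d, T x = (A.curryLeft x) (Fin.tail v) := fun x => rfl
    calc (∫ w : Fin (n + 1) → Ed d, F w)
        = ∫ x : Ed d, ∫ y : Fin n → Ed d, F (Fin.cons x y)
            ∂(Measure.pi fun _ : Fin n => volume) := by rw [step1, step2]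
      _ = ∫ x : Ed d, ψ ‖x - v 0‖ * T x := by
            refine integral_congr_ae (Filter.Eventually.of_forall fun x => ?_)
            show (∫ y : Fin n → Ed d, F (Fin.cons x y)
              ∂(Measure.pi fun _ : Fin n => volume)) = ψ ‖x - v 0‖ * T x
            rw [hinner x, hTx x]
      _ = T (v 0) := vm_key hψc hψsupp hψnorm (v 0) T
      _ = A v := by
            rw [hTx, ContinuousMultilinearMap.curryLeft_apply, Fin.cons_self_tail]

/-- Vertical mollification by a symmetric kernel fixes fiberwise multilinear functions:
`∫ A(w) ψ(|w₁−v₁|)⋯ψ(|wₙ−vₙ|) dw = A(v)`. -/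
theorem vertical_mollification_fixes_multilinear (d n : ℕ) (hd : 1 ≤ d) (hn : 1 ≤ n)
    (ψ : ℝ → ℝ) (hψc : Continuous ψ) (hψnn : ∀ s, 0 ≤ ψ s) (hψev : ∀ s, ψ (-s) = ψ s)
    (hψsupp : HasCompactSupport ψ)
    (hψnorm : (∫ w : EuclideanSpace ℝ (Fin d), ψ ‖w‖) = 1)
    (A : ContinuousMultilinearMap ℝ (fun _ : Fin n => EuclideanSpace ℝ (Fin d)) ℝ)
    (v : Fin n → EuclideanSpace ℝ (Fin d)) :
    (∫ w : Fin n → EuclideanSpace ℝ (Fin d), A w * ∏ i, ψ ‖w i - v i‖) = A v :=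
  vm_aux d hψc hψsupp hψnorm n A v
end
end
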